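/- For every integer n ≥ 32, the threshold b_n satisfies (n+5)/2 < b_n < (2n-1)/3. -/

import Mathlib

open Finset

/-- The threshold `b_n = min{ j : 2 ≤ j ≤ n, ∑_{i=j+1}^n 1/(i-2) ≤ 1/2 }` (empty sum = 0). -/
noncomputable def bThresh (n : ℕ) : ℕ :=
  sInf {j : ℕ | 2 ≤ j ∧ j ≤ n ∧ ∑ i ∈ Finset.Icc (j + 1) n, (1 : ℝ) / ((i : ℝ) - 2) ≤ 1 / 2}

/-- `u_n = (b_n - 2)(2n - 4) ∑_{i=b_n}^n 1/(i-2)`. -/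
noncomputable def uVal (n : ℕ) : ℝ :=
  ((bThresh n : ℝ) - 2) * (2 * (n : ℝ) - 4) *
    ∑ i ∈ Finset.Icc (bThresh n) n, (1 : ℝ) / ((i : ℝ) - 2)

/-- `f_n(x) = 3x² - (1+4n)x + (n-2)b_n + 2(n+1) + u_n`. -/
noncomputable def fPoly (n : ℕ) (x : ℝ) : ℝ :=
  3 * x ^ 2 - (1 + 4 * (n : ℝ)) * x + ((n : ℝ) - 2) * (bThresh n : ℝ) + 2 * ((n : ℝ) + 1) + uVal n

/-- The threshold `a_n = min{ j : 2 ≤ j ≤ n, f_n(j) ≤ 0 }`. -/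
noncomputable def aThresh (n : ℕ) : ℕ :=
  sInf {j : ℕ | 2 ≤ j ∧ j ≤ n ∧ fPoly n (j : ℝ) ≤ 0}


lemma key_upper (y : ℝ) (hy : 1 ≤ y) :
    1 / y ≤ Real.log (2 * y + 1) - Real.log (2 * y - 1) := by
  have hy0 : 0 < y := by linarith
  have h1 : (0:ℝ) < 2 * y - 1 := by linarith
  have h2 : (0:ℝ) < 2 * y + 1 := by linarith
  have hxpos : 0 < 1 / y := by positivity
  have hx : |1 / y| ≤ 1 := by
    rw [abs_of_pos hxpos, div_le_one hy0]; linarith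
  have hb := Real.exp_bound hx (by norm_num : 0 < 4)
  have hsum : ∑ i ∈ Finset.range 4, (1/y) ^ i / (Nat.factorial i) =
      1 + 1/y + (1/y)^2/2 + (1/y)^3/6 := by
    simp [Finset.sum_range_succ, Nat.factorial]
  rw [hsum, abs_of_pos hxpos] at hb
  norm_num [Nat.factorial] at hb
  have hb' : Real.exp (1/y) ≤ 1 + 1/y + (1/y)^2/2 + (1/y)^3/6 + (1/y)^4 * (5/96) := by
    have h3 := (abs_le.mp hb).2
    simp only [one_div, inv_pow]
    linarith
  have hexp : Real.exp (1/y) ≤ (2*y+1)/(2*y-1) := by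
    refine hb'.trans ?_
    rw [le_div_iff₀ h1]
    have expand : (1 + 1/y + (1/y)^2/2 + (1/y)^3/6 + (1/y)^4*(5/96)) * (2*y-1)
        = 2*y + 1 - (16*y^2 + 6*y + 5)/(96*y^4) := by
      field_simp
      ring
    rw [expand]
    have : (0:ℝ) < (16*y^2 + 6*y + 5)/(96*y^4) := by positivity
    linarith
  rw [← Real.log_div (ne_of_gt h2) (ne_of_gt h1)]
  exact (Real.le_log_iff_exp_le (by positivity)).mpr hexp

lemma key_lower (y : ℝ) (hy : 0 < y) :
    Real.log (y + 1) - Real.log y ≤ 1 / y := by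
  rw [← Real.log_div (by positivity) (ne_of_gt hy)]
  have h := Real.log_le_sub_one_of_pos (show (0:ℝ) < (y+1)/y by positivity)
  have h2 : (y+1)/y - 1 = 1/y := by field_simp; ring
  linarith

lemma sum_upper (j : ℕ) (hj : 2 ≤ j) : ∀ n : ℕ, j ≤ n →
    ∑ i ∈ Finset.Icc (j+1) n, (1:ℝ)/((i:ℝ)-2) ≤
      Real.log (2*(n:ℝ)-3) - Real.log (2*(j:ℝ)-3) := by
  intro n hn
  induction n, hn using Nat.le_induction with
  | base => rw [Finset.Icc_eq_empty (by omega)]; simp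
  | succ n hn ih =>
    rw [Finset.sum_Icc_succ_top (by omega)]
    have hn2 : (2:ℝ) ≤ (n:ℝ) := by exact_mod_cast le_trans hj hn
    have hy : (1:ℝ) ≤ (n:ℝ) - 1 := by linarith
    have hk := key_upper ((n:ℝ)-1) hy
    have e1 : ((n+1:ℕ):ℝ) - 2 = (n:ℝ) - 1 := by push_cast; ring
    have e2 : 2*(((n+1:ℕ)):ℝ) - 3 = 2*((n:ℝ)-1)+1 := by push_cast; ring
    have e3 : 2*((n:ℝ)-1)-1 = 2*(n:ℝ)-3 := by ring
    rw [e1, e2]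
    rw [e3] at hk
    linarith

lemma sum_lower (j : ℕ) (hj : 2 ≤ j) : ∀ n : ℕ, j ≤ n →
    Real.log ((n:ℝ)-1) - Real.log ((j:ℝ)-1) ≤
      ∑ i ∈ Finset.Icc (j+1) n, (1:ℝ)/((i:ℝ)-2) := by
  intro n hn
  induction n, hn using Nat.le_induction with
  | base => rw [Finset.Icc_eq_empty (by omega)]; simp
  | succ n hn ih =>
    rw [Finset.sum_Icc_succ_top (by omega)]
    have hn2 : (2:ℝ) ≤ (n:ℝ) := by exact_mod_cast le_trans hj hn
    have hy : (0:ℝ) < (n:ℝ) - 1 := by linarith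
    have hk := key_lower ((n:ℝ)-1) hy
    have e1 : ((n+1:ℕ):ℝ) - 2 = (n:ℝ) - 1 := by push_cast; ring
    have e2 : ((n+1:ℕ):ℝ) - 1 = ((n:ℝ)-1)+1 := by push_cast; ring
    rw [e1, e2]
    linarith

lemma exp_half_lo : (1.6487:ℝ) ≤ Real.exp (1/2) := by
  have hmul : Real.exp (1/2) * Real.exp (1/2) = Real.exp 1 := by
    rw [← Real.exp_add]; norm_num
  have hE := Real.exp_one_gt_d9
  have hp : (0:ℝ) < Real.exp (1/2) := Real.exp_pos _
  nlinarith

lemma exp_half_hi : Real.exp (1/2) ≤ 1.6488 := by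
  have hmul : Real.exp (1/2) * Real.exp (1/2) = Real.exp 1 := by
    rw [← Real.exp_add]; norm_num
  have hE := Real.exp_one_lt_d9
  have hp : (0:ℝ) < Real.exp (1/2) := Real.exp_pos _
  nlinarith

theorem bThresh_crude_bounds (n : ℕ) (hn : 32 ≤ n) :
    ((n : ℝ) + 5) / 2 < (bThresh n : ℝ) ∧ (bThresh n : ℝ) < (2 * (n : ℝ) - 1) / 3 := by
  have hn32 : (32:ℝ) ≤ (n:ℝ) := by exact_mod_cast hn
  have hnmem : n ∈ {j : ℕ | 2 ≤ j ∧ j ≤ n ∧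
      ∑ i ∈ Finset.Icc (j + 1) n, (1 : ℝ) / ((i : ℝ) - 2) ≤ 1 / 2} := by
    refine ⟨by omega, le_refl n, ?_⟩
    rw [Finset.Icc_eq_empty (by omega), Finset.sum_empty]
    norm_num
  have hbmem : 2 ≤ bThresh n ∧ bThresh n ≤ n ∧
      ∑ i ∈ Finset.Icc (bThresh n + 1) n, (1 : ℝ) / ((i : ℝ) - 2) ≤ 1 / 2 := by
    have h := Nat.sInf_mem (s := {j : ℕ | 2 ≤ j ∧ j ≤ n ∧
      ∑ i ∈ Finset.Icc (j + 1) n, (1 : ℝ) / ((i : ℝ) - 2) ≤ 1 / 2}) ⟨n, hnmem⟩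
    exact h
  obtain ⟨hb2, hbn, hbsum⟩ := hbmem
  constructor
  · -- lower bound
    by_contra h
    push_neg at h
    have hcast : 2*((bThresh n):ℝ) ≤ (n:ℝ) + 5 := by linarith
    have hb1 : (0:ℝ) < (bThresh n:ℝ) - 1 := by
      have : (2:ℝ) ≤ (bThresh n:ℝ) := by exact_mod_cast hb2
      linarith
    have hsum := sum_lower (bThresh n) hb2 n hbn
    have hineq : Real.exp (1/2) * ((bThresh n:ℝ) - 1) < (n:ℝ) - 1 := by
      have h1 : Real.exp (1/2) * ((bThresh n:ℝ)-1) ≤ 1.6488*((bThresh n:ℝ)-1) :=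
        mul_le_mul_of_nonneg_right exp_half_hi (by linarith)
      nlinarith
    have hlog : 1/2 + Real.log ((bThresh n:ℝ)-1) < Real.log ((n:ℝ)-1) := by
      have h2 := Real.log_lt_log (by positivity) hineq
      rw [Real.log_mul (Real.exp_ne_zero _) (ne_of_gt hb1), Real.log_exp] at h2
      linarith
    linarith
  · -- upper bound
    set j0 := (2*n-2)/3 with hj0
    have hd1 : 3*j0 + 2 ≤ 2*n ∧ 2*n ≤ 3*j0 + 4 ∧ 20 ≤ j0 ∧ j0 ≤ n := by omega
    have hj020 : (20:ℝ) ≤ (j0:ℝ) := by exact_mod_cast hd1.2.2.1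
    have hcast1 : 3*(j0:ℝ) + 2 ≤ 2*(n:ℝ) := by exact_mod_cast hd1.1
    have hcast2 : 2*(n:ℝ) ≤ 3*(j0:ℝ) + 4 := by exact_mod_cast hd1.2.1
    have hb2' : (0:ℝ) < 2*(j0:ℝ)-3 := by linarith
    have hj0mem : j0 ∈ {j : ℕ | 2 ≤ j ∧ j ≤ n ∧
        ∑ i ∈ Finset.Icc (j + 1) n, (1 : ℝ) / ((i : ℝ) - 2) ≤ 1 / 2} := by
      refine ⟨by omega, by omega, ?_⟩
      have hsum := sum_upper j0 (by omega) n (by omega)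
      have hineq : 2*(n:ℝ) - 3 ≤ Real.exp (1/2) * (2*(j0:ℝ) - 3) := by
        have h1 : (1.6487:ℝ)*(2*(j0:ℝ)-3) ≤ Real.exp (1/2) * (2*(j0:ℝ)-3) :=
          mul_le_mul_of_nonneg_right exp_half_lo (by linarith)
        nlinarith
      have hlog : Real.log (2*(n:ℝ)-3) - Real.log (2*(j0:ℝ)-3) ≤ 1/2 := by
        have h2n : (0:ℝ) < 2*(n:ℝ)-3 := by linarith
        have h2 := Real.log_le_log (by positivity) hineq
        rw [Real.log_mul (Real.exp_ne_zero _) (ne_of_gt hb2'), Real.log_exp] at h2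
        linarith
      linarith
    have hble : bThresh n ≤ j0 := Nat.sInf_le hj0mem
    have : (bThresh n:ℝ) ≤ (j0:ℝ) := by exact_mod_cast hble
    linarith
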